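/- arXiv:1811.05872 — 4 statements merged into one kernel-verified Lean document; each statement's English description precedes it below -/
import Mathlib

section
/- Let Π_BJ be the operator on L²(ℝ) defined (for almost every x) by (Π_BJ ψ)(x) = ∫_0^1 (1/(2|τ-1|)) ψ(τx/(τ-1)) dτ. Then Π_BJ is bounded with operator norm at most π/2. -/
open Real MeasureTheory
open Set

lemma BJaux_sqrt4 : Real.sqrt 4 = 2 := by
  rw [show (4:ℝ) = 2^2 by norm_num, Real.sqrt_sq (by norm_num : (0:ℝ) ≤ 2)]

lemma BJaux_integrable :
    IntervalIntegrable (fun τ : ℝ => 1 / (2 * Real.sqrt (τ * (1 - τ)))) volume 0 1 := by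
  have h1 : IntervalIntegrable (fun τ : ℝ => τ ^ (-(1/2) : ℝ)) volume 0 1 :=
    intervalIntegral.intervalIntegrable_rpow' (by norm_num)
  have h2 : IntervalIntegrable (fun τ : ℝ => (1 - τ) ^ (-(1/2) : ℝ)) volume 0 1 := by
    have := h1.comp_sub_left 1
    simpa using this.symm
  refine (h1.add h2).mono_fun ?_ ?_
  · refine Measurable.aestronglyMeasurable ?_
    exact measurable_const.div
      (((measurable_id.mul (measurable_const.sub measurable_id)).sqrt).const_mul 2)
  · rw [Set.uIoc_of_le (by norm_num : (0:ℝ) ≤ 1)]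
    filter_upwards [ae_restrict_mem measurableSet_Ioc] with τ hτ
    rcases eq_or_lt_of_le hτ.2 with h1' | h1'
    · subst h1'
      have h0 : Real.sqrt (1 * (1-1)) = 0 := by norm_num
      rw [Real.norm_eq_abs, Real.norm_eq_abs, h0]
      norm_num
    · have hτ0 : 0 < τ := hτ.1
      have hτ1 : 0 < 1 - τ := by linarith
      set a := Real.sqrt τ with ha
      set b := Real.sqrt (1 - τ) with hb
      have hap : 0 < a := Real.sqrt_pos.mpr hτ0
      have hbp : 0 < b := Real.sqrt_pos.mpr hτ1
      have ha2 : a ^ 2 = τ := Real.sq_sqrt hτ0.le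
      have hb2 : b ^ 2 = 1 - τ := Real.sq_sqrt hτ1.le
      have hab : 1 ≤ a + b := by nlinarith [mul_pos hap hbp]
      have hr1 : τ ^ (-(1/2) : ℝ) = a⁻¹ := by
        rw [Real.rpow_neg hτ0.le, ha, Real.sqrt_eq_rpow]
      have hr2 : (1 - τ) ^ (-(1/2) : ℝ) = b⁻¹ := by
        rw [Real.rpow_neg hτ1.le, hb, Real.sqrt_eq_rpow]
      have hsq : Real.sqrt (τ * (1 - τ)) = a * b := Real.sqrt_mul hτ0.le _
      rw [Real.norm_eq_abs, Real.norm_eq_abs, hsq, hr1, hr2,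
        abs_of_nonneg (by positivity), abs_of_nonneg (by positivity)]
      rw [div_le_iff₀ (by positivity)]
      have : (a⁻¹ + b⁻¹) = (a + b) / (a * b) := by field_simp; ring
      rw [this, div_mul_eq_mul_div, le_div_iff₀ (by positivity)]
      nlinarith [mul_pos hap hbp]

lemma BJaux_integral :
    ∫ τ in (0:ℝ)..1, 1 / (2 * Real.sqrt (τ * (1 - τ))) = π / 2 := by
  have hd : ∀ τ ∈ Ioo (0:ℝ) 1,
      HasDerivWithinAt (fun τ : ℝ => Real.arcsin (2 * τ - 1) / 2)
        (1 / (2 * Real.sqrt (τ * (1 - τ)))) (Ioi τ) τ := by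
    intro τ hτ
    have h1 : (2*τ - 1) ≠ -1 := by intro h; have := hτ.1; linarith [h]
    have h2 : (2*τ - 1) ≠ 1 := by intro h; have := hτ.2; linarith [h]
    have hinner : HasDerivAt (fun τ : ℝ => 2 * τ - 1) 2 τ := by
      simpa using ((hasDerivAt_id τ).const_mul 2).sub_const 1
    have := ((Real.hasDerivAt_arcsin h1 h2).comp τ hinner).div_const 2
    have hs : Real.sqrt (1 - (2*τ-1)^2) = 2 * Real.sqrt (τ * (1 - τ)) := by
      rw [show 1 - (2*τ-1)^2 = 4 * (τ * (1 - τ)) by ring,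
        Real.sqrt_mul (by norm_num : (0:ℝ) ≤ 4), BJaux_sqrt4]
    have heq : 1 / Real.sqrt (1 - (2*τ-1)^2) * 2 / 2 = 1 / (2 * Real.sqrt (τ * (1 - τ))) := by
      rw [hs]; ring
    rw [← heq]
    exact this.hasDerivWithinAt
  have hcont : ContinuousOn (fun τ : ℝ => Real.arcsin (2 * τ - 1) / 2) (Icc 0 1) :=
    ((Real.continuous_arcsin.comp (by continuity)).div_const 2).continuousOn
  rw [intervalIntegral.integral_eq_sub_of_hasDeriv_right_of_le zero_le_one hcont hd
    BJaux_integrable]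
  norm_num [Real.arcsin_one, Real.arcsin_neg_one]
  ring

lemma BJaux_lintegral :
    ∫⁻ τ in Ioc (0:ℝ) 1, ENNReal.ofReal (1 / (2 * Real.sqrt (τ * (1 - τ))))
      = ENNReal.ofReal (π / 2) := by
  rw [← MeasureTheory.ofReal_integral_eq_lintegral_ofReal BJaux_integrable.1
    (ae_of_all _ fun τ => by positivity)]
  rw [← intervalIntegral.integral_of_le zero_le_one, BJaux_integral]

open scoped ENNReal NNReal

set_option maxHeartbeats 1000000 in
theorem BJ_parity_operator_norm_le
    (T : Lp ℂ 2 (volume : Measure ℝ) →L[ℂ] Lp ℂ 2 (volume : Measure ℝ))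
    (hT : ∀ ψ : Lp ℂ 2 (volume : Measure ℝ),
      (T ψ : ℝ → ℂ) =ᵐ[volume]
        fun x => ∫ τ in (0 : ℝ)..1,
          ((1 / (2 * |τ - 1|) : ℝ) : ℂ) * ψ (τ * x / (τ - 1))) :
    ‖T‖ ≤ Real.pi / 2 := by
  refine T.opNorm_le_bound (by positivity) fun ψ => ?_
  obtain ⟨g, hgsm, hψg⟩ : ∃ g : ℝ → ℂ, StronglyMeasurable g ∧ (ψ : ℝ → ℂ) =ᵐ[volume] g :=
    ⟨(Lp.aestronglyMeasurable ψ).mk _, (Lp.aestronglyMeasurable ψ).stronglyMeasurable_mk,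
      (Lp.aestronglyMeasurable ψ).ae_eq_mk⟩
  have hgm : Measurable g := hgsm.measurable
  set K : ℝ → ℝ → ℝ≥0∞ :=
    fun τ x => ENNReal.ofReal (1/(2*|τ-1|)) * (‖g (τ*x/(τ-1))‖₊ : ℝ≥0∞) with hK
  have hmm : Measurable (fun p : ℝ × ℝ => p.1 * p.2 / (p.1 - 1)) :=
    (measurable_fst.mul measurable_snd).div (measurable_fst.sub measurable_const)
  have hcm : Measurable (fun τ : ℝ => ENNReal.ofReal (1/(2*|τ-1|))) :=
    ENNReal.measurable_ofReal.comp
      (measurable_const.div (((measurable_id.sub measurable_const).abs).const_mul 2))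
  have hKm : Measurable (fun p : ℝ × ℝ => K p.1 p.2) :=
    (hcm.comp measurable_fst).mul ((hgm.comp hmm).enorm)
  have hKx : ∀ x, Measurable (fun τ => K τ x) := by
    intro x
    have := hKm.comp (measurable_prodMk_right (y := x))
    exact this
  have hKτ : ∀ τ, Measurable (fun x => K τ x) := by
    intro τ
    have := hKm.comp (measurable_prodMk_left (x := τ))
    exact this
  set C : ℝ → ℝ≥0∞ := fun x => ∫⁻ τ in Ioc (0:ℝ) 1, K τ x with hC
  have hCm : Measurable C := (hKm.comp measurable_swap).lintegral_prod_right'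
  set J : ℝ≥0∞ := ∫⁻ y, (‖g y‖₊ : ℝ≥0∞) ^ (2:ℝ) with hJ
  have hφm : Measurable (fun y => (‖g y‖₊ : ℝ≥0∞) ^ (2:ℝ)) := hgm.enorm.pow measurable_const
  set A : ℝ → ℝ≥0∞ := fun τ => (∫⁻ x, K τ x ^ (2:ℝ)) ^ ((1:ℝ)/2) with hA
  have hAm : Measurable A :=
    ((hKm.pow measurable_const).lintegral_prod_right').pow measurable_const
  -- the function F
  set F : ℝ → ℂ :=
    fun x => ∫ τ in Ioc (0:ℝ) 1, ((1/(2*|τ-1|) : ℝ) : ℂ) * g (τ*x/(τ-1)) with hF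
  -- Step 1 : T ψ =ᵐ F
  have hae : (T ψ : ℝ → ℂ) =ᵐ[volume] F := by
    obtain ⟨N, hNsub, hNmeas, hNnull⟩ := exists_measurable_superset_of_null (ae_iff.mp hψg)
    have hsec : ∀ᵐ τ ∂(volume.restrict (Ioc (0:ℝ) 1)), ∀ᵐ x ∂(volume : Measure ℝ), τ * x / (τ-1) ∉ N := by
      have h1ne : ∀ᵐ τ : ℝ ∂volume, τ ≠ 1 := by
        refine ae_iff.mpr ?_
        have : {τ : ℝ | ¬ τ ≠ 1} = {1} := by ext; simp
        rw [this]
        exact measure_singleton 1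
      have hae1 : ∀ᵐ τ ∂(volume.restrict (Ioc (0:ℝ) 1)), τ ∈ Ioo (0:ℝ) 1 := by
        filter_upwards [ae_restrict_mem measurableSet_Ioc, ae_restrict_of_ae h1ne] with τ h h'
        exact ⟨h.1, lt_of_le_of_ne h.2 h'⟩
      filter_upwards [hae1] with τ hτ
      have ht1 : τ - 1 ≠ 0 := by have := hτ.2; intro h; simp only [sub_eq_zero] at h; linarith
      have ha : τ/(τ-1) ≠ 0 := div_ne_zero (ne_of_gt hτ.1) ht1
      have hpre : volume ((fun x => (τ/(τ-1)) * x) ⁻¹' N) = 0 := by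
        rw [← Measure.map_apply (measurable_const_mul _) hNmeas,
          Real.map_volume_mul_left ha]
        simp [hNnull]
      filter_upwards [measure_eq_zero_iff_ae_notMem.mp hpre] with x hx
      rwa [mul_div_right_comm]
    have hswap : ∀ᵐ x ∂(volume : Measure ℝ), ∀ᵐ τ ∂(volume.restrict (Ioc (0:ℝ) 1)), τ * x / (τ-1) ∉ N := by
      refine (Measure.ae_ae_comm ?_).mp hsec
      exact (hmm hNmeas).compl
    filter_upwards [hT ψ, hswap] with x h1 h2
    rw [h1, intervalIntegral.integral_of_le zero_le_one]
    refine integral_congr_ae ?_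
    filter_upwards [h2] with τ hτ
    have : (ψ : ℝ → ℂ) (τ * x / (τ - 1)) = g (τ * x / (τ - 1)) := by
      by_contra h
      exact hτ (hNsub h)
    rw [this]
  -- Step 2 : pointwise bound on F
  have hF1 : ∀ x, (‖F x‖₊ : ℝ≥0∞) ≤ C x := by
    intro x
    refine (enorm_integral_le_lintegral_enorm _).trans_eq ?_
    refine lintegral_congr fun τ => ?_
    show (‖_‖₊ : ℝ≥0∞) = _
    rw [nnnorm_mul, ENNReal.coe_mul, Complex.nnnorm_real, ← enorm_eq_nnnorm, Real.enorm_eq_ofReal_abs,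
      abs_of_nonneg (by positivity)]
  -- Step 3 : value of A on Ioo
  have hAval : ∀ τ ∈ Ioo (0:ℝ) 1,
      A τ = ENNReal.ofReal (1/(2*Real.sqrt (τ*(1-τ)))) * J ^ ((1:ℝ)/2) := by
    intro τ hτ
    obtain ⟨hτ0, hτ1⟩ := hτ
    have ht1 : τ - 1 ≠ 0 := by intro h; rw [sub_eq_zero] at h; exact absurd h (ne_of_lt hτ1)
    have habs : |τ - 1| = 1 - τ := by rw [abs_of_neg (by linarith)]; ring
    have ha : τ/(τ-1) ≠ 0 := div_ne_zero (ne_of_gt hτ0) ht1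
    have h1τ : (0:ℝ) < 1 - τ := by linarith
    have hgam : Measurable fun x : ℝ => (‖g ((τ/(τ-1)) * x)‖₊ : ℝ≥0∞) ^ (2:ℝ) := by
      have := hφm.comp (measurable_const_mul (τ/(τ-1)))
      simpa [Function.comp_def] using this
    have hKrw : ∀ x : ℝ, K τ x ^ (2:ℝ)
        = (ENNReal.ofReal (1/(2*(1-τ))))^(2:ℝ)
          * (‖g ((τ/(τ-1)) * x)‖₊ : ℝ≥0∞) ^ (2:ℝ) := by
      intro x
      have hxa : τ * x / (τ - 1) = (τ/(τ-1)) * x := mul_div_right_comm τ x (τ-1)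
      simp only [hK]
      rw [habs, hxa, ENNReal.mul_rpow_of_nonneg _ _ (by norm_num : (0:ℝ) ≤ 2)]
    calc A τ = ((ENNReal.ofReal (1/(2*(1-τ))))^(2:ℝ)
          * ∫⁻ x, (‖g ((τ/(τ-1)) * x)‖₊ : ℝ≥0∞) ^ (2:ℝ)) ^ ((1:ℝ)/2) := by
          simp only [hA]
          rw [← lintegral_const_mul _ hgam]
          congr 1
          exact lintegral_congr hKrw
      _ = ((ENNReal.ofReal (1/(2*(1-τ))))^(2:ℝ)
            * (ENNReal.ofReal |(τ/(τ-1))⁻¹| * J)) ^ ((1:ℝ)/2) := by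
          rw [show (∫⁻ x, (‖g ((τ/(τ-1)) * x)‖₊ : ℝ≥0∞) ^ (2:ℝ))
              = ∫⁻ y, (‖g y‖₊ : ℝ≥0∞) ^ (2:ℝ)
                  ∂(Measure.map (fun x => (τ/(τ-1)) * x) volume)
            from (lintegral_map hφm (measurable_const_mul _)).symm,
            Real.map_volume_mul_left ha, lintegral_smul_measure, smul_eq_mul, hJ]
      _ = ENNReal.ofReal (1/(2*(1-τ))) * (ENNReal.ofReal |(τ/(τ-1))⁻¹|) ^ ((1:ℝ)/2)
            * J ^ ((1:ℝ)/2) := by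
          rw [ENNReal.mul_rpow_of_nonneg _ _ (by norm_num : (0:ℝ) ≤ 1/2),
            ENNReal.mul_rpow_of_nonneg _ _ (by norm_num : (0:ℝ) ≤ 1/2),
            ← ENNReal.rpow_mul, show (2:ℝ) * ((1:ℝ)/2) = 1 by norm_num, ENNReal.rpow_one,
            mul_assoc]
      _ = ENNReal.ofReal (1/(2*Real.sqrt (τ*(1-τ)))) * J ^ ((1:ℝ)/2) := by
          congr 1
          rw [ENNReal.ofReal_rpow_of_nonneg (abs_nonneg _) (by norm_num : (0:ℝ) ≤ 1/2),
            ← ENNReal.ofReal_mul (by positivity)]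
          congr 1
          have hainv : |(τ/(τ-1))⁻¹| = (1-τ)/τ := by
            rw [inv_div, abs_div, habs, abs_of_pos hτ0]
          rw [hainv, show ((1-τ)/τ) ^ ((1:ℝ)/2) = Real.sqrt ((1-τ)/τ) from
            (Real.sqrt_eq_rpow _).symm, Real.sqrt_div h1τ.le, Real.sqrt_mul hτ0.le]
          have hu : 0 < Real.sqrt τ := Real.sqrt_pos.mpr hτ0
          have hv : 0 < Real.sqrt (1-τ) := Real.sqrt_pos.mpr h1τ
          have hv2 : Real.sqrt (1-τ) ^ 2 = 1-τ := Real.sq_sqrt h1τ.le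
          field_simp
          nlinarith [hv2, mul_pos hu hv]
  -- Step 4 : integral of A
  have hAint : ∫⁻ τ in Ioc (0:ℝ) 1, A τ ≤ ENNReal.ofReal (π/2) * J ^ ((1:ℝ)/2) := by
    have hfm : Measurable fun τ : ℝ => ENNReal.ofReal (1/(2*Real.sqrt (τ*(1-τ)))) :=
      ENNReal.measurable_ofReal.comp (measurable_const.div
        (((measurable_id.mul (measurable_const.sub measurable_id)).sqrt).const_mul 2))
    have hIoo : ∫⁻ τ in Ioc (0:ℝ) 1, A τ = ∫⁻ τ in Ioo (0:ℝ) 1, A τ := by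
      rw [Measure.restrict_congr_set Ioo_ae_eq_Ioc]
    rw [hIoo, setLIntegral_congr_fun measurableSet_Ioo
      (fun τ hτ => hAval τ hτ), lintegral_mul_const _ hfm,
      Measure.restrict_congr_set Ioo_ae_eq_Ioc, BJaux_lintegral]
  -- Step 5 : Minkowski-type bound
  have h1meas : AEMeasurable (Function.uncurry fun (x τ : ℝ) => K τ x * C x)
      ((volume : Measure ℝ).prod (volume.restrict (Ioc (0:ℝ) 1))) := by
    apply Measurable.aemeasurable
    have := (hKm.comp (measurable_swap (α := ℝ) (β := ℝ))).mul (hCm.comp measurable_fst)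
    exact this
  have h2meas : ∀ τ, AEMeasurable (Function.uncurry fun (x σ : ℝ) => K τ x * K σ x)
      ((volume : Measure ℝ).prod (volume.restrict (Ioc (0:ℝ) 1))) := by
    intro τ
    apply Measurable.aemeasurable
    have := ((hKτ τ).comp (measurable_fst (α := ℝ) (β := ℝ))).mul
      (hKm.comp (measurable_swap (α := ℝ) (β := ℝ)))
    exact this
  have hrpow : ∀ y : ℝ≥0∞, y ^ (2:ℝ) = y * y := by
    intro y
    rw [show (2:ℝ) = ((2:ℕ):ℝ) by norm_num, ENNReal.rpow_natCast]
    ring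
  have hCsq : ∫⁻ x, C x ^ (2:ℝ) ≤ (∫⁻ τ in Ioc (0:ℝ) 1, A τ) ^ (2:ℝ) := by
    have hconj : Real.HolderConjugate 2 2 := Real.HolderConjugate.two_two
    calc ∫⁻ x, C x ^ (2:ℝ)
        = ∫⁻ x, ∫⁻ τ in Ioc (0:ℝ) 1, K τ x * C x := by
          refine lintegral_congr fun x => ?_
          rw [hrpow, lintegral_mul_const _ (hKx x)]
      _ = ∫⁻ τ in Ioc (0:ℝ) 1, ∫⁻ x, K τ x * C x := lintegral_lintegral_swap h1meas
      _ = ∫⁻ τ in Ioc (0:ℝ) 1, ∫⁻ x, ∫⁻ σ in Ioc (0:ℝ) 1, K τ x * K σ x := by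
          refine lintegral_congr fun τ => lintegral_congr fun x => ?_
          rw [lintegral_const_mul _ (hKx x)]
      _ = ∫⁻ τ in Ioc (0:ℝ) 1, ∫⁻ σ in Ioc (0:ℝ) 1, ∫⁻ x, K τ x * K σ x := by
          refine lintegral_congr fun τ => ?_
          exact lintegral_lintegral_swap (h2meas τ)
      _ ≤ ∫⁻ τ in Ioc (0:ℝ) 1, ∫⁻ σ in Ioc (0:ℝ) 1, A τ * A σ := by
          refine lintegral_mono fun τ => lintegral_mono fun σ => ?_
          have hcs := ENNReal.lintegral_mul_le_Lp_mul_Lq (volume : Measure ℝ) hconj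
            ((hKτ τ).aemeasurable) ((hKτ σ).aemeasurable)
          simp only [Pi.mul_apply] at hcs
          simpa only [hA] using hcs
      _ = (∫⁻ τ in Ioc (0:ℝ) 1, A τ) ^ (2:ℝ) := by
          rw [hrpow, show (∫⁻ τ in Ioc (0:ℝ) 1, ∫⁻ σ in Ioc (0:ℝ) 1, A τ * A σ)
              = ∫⁻ τ in Ioc (0:ℝ) 1, A τ * ∫⁻ σ in Ioc (0:ℝ) 1, A σ from
            lintegral_congr fun τ => lintegral_const_mul _ hAm,
            lintegral_mul_const _ hAm]
  -- Step 6 : conclude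
  have hJeq : J ^ ((1:ℝ)/2) = eLpNorm (ψ : ℝ → ℂ) 2 volume := by
    rw [eLpNorm_congr_ae hψg, eLpNorm_eq_lintegral_rpow_enorm_toReal
      (by norm_num) (by norm_num)]
    simp only [ENNReal.toReal_ofNat, hJ]
    rfl
  have hFle : eLpNorm F 2 volume ≤ ENNReal.ofReal (π/2) * eLpNorm (ψ : ℝ → ℂ) 2 volume := by
    rw [eLpNorm_eq_lintegral_rpow_enorm_toReal (by norm_num) (by norm_num)]
    simp only [ENNReal.toReal_ofNat]
    calc (∫⁻ x, ((‖F x‖₊ : ℝ≥0∞)) ^ (2:ℝ)) ^ ((1:ℝ)/2)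
        ≤ (∫⁻ x, C x ^ (2:ℝ)) ^ ((1:ℝ)/2) :=
          ENNReal.rpow_le_rpow
            (lintegral_mono fun x => ENNReal.rpow_le_rpow (hF1 x) (by norm_num))
            (by norm_num)
      _ ≤ ((∫⁻ τ in Ioc (0:ℝ) 1, A τ) ^ (2:ℝ)) ^ ((1:ℝ)/2) :=
          ENNReal.rpow_le_rpow hCsq (by norm_num)
      _ = ∫⁻ τ in Ioc (0:ℝ) 1, A τ := by
          rw [← ENNReal.rpow_mul, show (2:ℝ) * ((1:ℝ)/2) = 1 by norm_num, ENNReal.rpow_one]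
      _ ≤ ENNReal.ofReal (π/2) * J ^ ((1:ℝ)/2) := hAint
      _ = ENNReal.ofReal (π/2) * eLpNorm (ψ : ℝ → ℂ) 2 volume := by rw [hJeq]
  rw [Lp.norm_def, Lp.norm_def, eLpNorm_congr_ae hae]
  refine (ENNReal.toReal_mono ?_ hFle).trans ?_
  · exact ENNReal.mul_ne_top ENNReal.ofReal_ne_top (Lp.eLpNorm_ne_top ψ)
  · rw [ENNReal.toReal_mul, ENNReal.toReal_ofReal (by positivity)]
end

section
/- For each real E and x ≠ 0, the functions ψ_±^E with ψ_+^E(x) = (1/(2√π))|x|^{-(iE+1/2)} and ψ_-^E(x) = (1/(2√π)) sgn(x) |x|^{-(iE+1/2)} satisfy (1/4)∫_{-∞}^{∞} sech(ξ/2) e^{ξ/2} ψ_±^E(-e^ξ x) dξ = ± (π/2) sech(πE) ψ_±^E(x). -/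
open Real MeasureTheory

noncomputable def psiPlus (E : ℝ) (x : ℝ) : ℂ :=
  ((1 / (2 * Real.sqrt Real.pi) : ℝ) : ℂ) *
    ((|x| : ℝ) : ℂ) ^ (-(Complex.I * E + 1 / 2))

noncomputable def psiMinus (E : ℝ) (x : ℝ) : ℂ :=
  ((Real.sign x / (2 * Real.sqrt Real.pi) : ℝ) : ℂ) *
    ((|x| : ℝ) : ℂ) ^ (-(Complex.I * E + 1 / 2))

lemma L1 (E ξ : ℝ) :
    ((1 / Real.cosh (ξ / 2) : ℝ) : ℂ) * Complex.exp (-(Complex.I * E) * ξ) =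
      2 * Complex.exp ((1/2 - Complex.I * E) * ξ) / ((1 + Real.exp ξ : ℝ) : ℂ) := by
  have hc : (Real.cosh (ξ/2)) ≠ 0 := (Real.cosh_pos _).ne'
  have hcC : ((Real.cosh (ξ/2) : ℝ) : ℂ) ≠ 0 := by exact_mod_cast hc
  have heC : ((1 + Real.exp ξ : ℝ) : ℂ) ≠ 0 := by
    exact_mod_cast (by positivity : (1 + Real.exp ξ) ≠ 0)
  have e1 : Complex.exp (-(Complex.I * E) * ξ) * Complex.exp ξ
      = Complex.exp ((1/2 - Complex.I * E) * ξ) * Complex.exp ((ξ:ℂ)/2) := by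
    rw [← Complex.exp_add, ← Complex.exp_add]; congr 1; ring
  have e2 : Complex.exp (-(Complex.I * E) * ξ)
      = Complex.exp ((1/2 - Complex.I * E) * ξ) * Complex.exp (-((ξ:ℂ)/2)) := by
    rw [← Complex.exp_add]; congr 1; ring
  have key : Complex.exp (-(Complex.I * E) * ξ) * ((1 + Real.exp ξ : ℝ) : ℂ)
      = 2 * Complex.exp ((1/2 - Complex.I * E) * ξ) * ((Real.cosh (ξ/2) : ℝ) : ℂ) := by
    rw [Real.cosh_eq]
    push_cast
    linear_combination e1 + e2
  rw [show ((1 / Real.cosh (ξ / 2) : ℝ) : ℂ) = 1 / ((Real.cosh (ξ/2) : ℝ) : ℂ) by push_cast; ring,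
    div_mul_eq_mul_div, div_eq_div_iff hcC heC]
  linear_combination key

lemma L2 (E : ℝ) :
    ∫ ξ : ℝ, ((1 / Real.cosh (ξ / 2) : ℝ) : ℂ) * Complex.exp (-(Complex.I * E) * ξ)
      = 2 * Real.pi / ((Real.cosh (Real.pi * E) : ℝ) : ℂ) := by
  set u : ℂ := 1/2 - Complex.I * E with hu
  set v : ℂ := 1/2 + Complex.I * E with hv
  set f : ℝ → ℝ := fun x => Real.log x - Real.log (1 - x) with hf
  set f' : ℝ → ℝ := fun x => x⁻¹ + (1-x)⁻¹ with hf'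
  -- exp of f
  have hA : ∀ x ∈ Set.Ioo (0:ℝ) 1, Real.exp (f x) = x / (1 - x) := by
    intro x hx
    rw [hf, Real.exp_sub, Real.exp_log hx.1, Real.exp_log (by linarith [hx.2])]
  -- derivative
  have hderiv : ∀ x ∈ Set.Ioo (0:ℝ) 1, HasDerivWithinAt f (f' x) (Set.Ioo (0:ℝ) 1) x := by
    intro x hx
    have h1 : HasDerivAt Real.log x⁻¹ x := Real.hasDerivAt_log hx.1.ne'
    have h2 : HasDerivAt (fun y : ℝ => 1 - y) (-1) x := (hasDerivAt_id x).const_sub 1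
    have h3 : HasDerivAt (fun y : ℝ => Real.log (1 - y)) ((1-x)⁻¹ * (-1)) x :=
      (Real.hasDerivAt_log (by linarith [hx.2] : (1:ℝ) - x ≠ 0)).comp x h2
    have := h1.sub h3
    have h4 : HasDerivAt f (f' x) x := by
      refine this.congr_deriv ?_
      simp only [hf']
      ring
    exact h4.hasDerivWithinAt
  -- image
  have himg : f '' Set.Ioo (0:ℝ) 1 = Set.univ := by
    apply Set.eq_univ_of_forall
    intro y
    have hden : (0:ℝ) < 1 + Real.exp y := by positivity
    refine ⟨Real.exp y / (1 + Real.exp y), ⟨by positivity, by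
      rw [div_lt_one hden]; linarith⟩, ?_⟩
    have h1x : 1 - Real.exp y / (1 + Real.exp y) = (1 + Real.exp y)⁻¹ := by
      field_simp
      ring
    rw [hf]
    simp only [h1x, Real.log_inv, Real.log_div (Real.exp_ne_zero y) hden.ne']
    rw [Real.log_exp]; ring
  -- injectivity
  have hinj : Set.InjOn f (Set.Ioo (0:ℝ) 1) := by
    intro a ha b hb h
    have h1 : a / (1 - a) = b / (1 - b) := by rw [← hA a ha, ← hA b hb, h]
    have ha1 : (1:ℝ) - a ≠ 0 := by have := ha.2; intro h'; linarith
    have hb1 : (1:ℝ) - b ≠ 0 := by have := hb.2; intro h'; linarith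
    field_simp at h1
    linarith
  -- change of variables
  have hcv := integral_image_eq_integral_abs_deriv_smul measurableSet_Ioo hderiv hinj
      (fun ξ => ((1 / Real.cosh (ξ / 2) : ℝ) : ℂ) * Complex.exp (-(Complex.I * E) * ξ))
  rw [himg] at hcv
  rw [← setIntegral_univ, hcv]
  -- pointwise identification with Beta integrand
  have hpt : Set.EqOn
      (fun x : ℝ => |f' x| • (((1 / Real.cosh (f x / 2) : ℝ) : ℂ) *
        Complex.exp (-(Complex.I * E) * (f x))))
      (fun x : ℝ => 2 * ((x:ℂ) ^ (u - 1) * ((1 - x : ℝ):ℂ) ^ (v - 1)))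
      (Set.Ioo (0:ℝ) 1) := by
    intro x hx
    have hx0 : (0:ℝ) < x := hx.1
    have hx1 : (0:ℝ) < 1 - x := by linarith [hx.2]
    have hxC : ((x:ℝ):ℂ) ≠ 0 := by exact_mod_cast hx0.ne'
    have hx1C : ((1 - x : ℝ):ℂ) ≠ 0 := by exact_mod_cast hx1.ne'
    simp only
    rw [L1]
    -- denominators
    have hden : 1 + Real.exp (f x) = (1 - x)⁻¹ := by
      rw [hA x hx]; field_simp
      ring
    -- exponentials via logs
    have hLx : (Complex.log x) = ((Real.log x : ℝ):ℂ) := (Complex.ofReal_log hx0.le).symm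
    have hL1x : (Complex.log ((1 - x : ℝ):ℂ)) = ((Real.log (1-x) : ℝ):ℂ) :=
      (Complex.ofReal_log hx1.le).symm
    have hcp1 : (x:ℂ) ^ (u - 1) = Complex.exp (Complex.log x * (u - 1)) :=
      Complex.cpow_def_of_ne_zero hxC _
    have hcp2 : ((1 - x : ℝ):ℂ) ^ (v - 1) = Complex.exp (Complex.log ((1-x:ℝ):ℂ) * (v - 1)) :=
      Complex.cpow_def_of_ne_zero hx1C _
    have hfx : ((f x : ℝ):ℂ) = ((Real.log x : ℝ):ℂ) - ((Real.log (1-x) : ℝ):ℂ) := by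
      rw [hf]; push_cast; ring
    rw [Complex.real_smul]
    set Lx : ℂ := ((Real.log x : ℝ):ℂ) with hLxdef
    set L1x : ℂ := ((Real.log (1-x) : ℝ):ℂ) with hL1xdef
    have hexpLx : Complex.exp Lx = (x:ℂ) := by
      rw [← hLx, Complex.exp_log hxC]
    have hexpL1x : Complex.exp L1x = ((1-x:ℝ):ℂ) := by
      rw [← hL1x, Complex.exp_log hx1C]
    have hab : Complex.exp ((1/2 - Complex.I * E) * ((f x : ℝ):ℂ))
        = Complex.exp (u * Lx) * (Complex.exp (u * L1x))⁻¹ := by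
      rw [hfx, ← Complex.exp_neg, ← Complex.exp_add]
      congr 1
      rw [hu]; ring
    have hxpow : (x:ℂ) ^ (u - 1) = Complex.exp (u * Lx) * ((x:ℂ))⁻¹ := by
      rw [hcp1, hLx, show Lx * (u-1) = u * Lx + -Lx by ring, Complex.exp_add,
        Complex.exp_neg, hexpLx]
    have h1xpow : ((1-x:ℝ):ℂ) ^ (v - 1) = (Complex.exp (u * L1x))⁻¹ := by
      rw [hcp2, hL1x, show L1x * (v-1) = -(u * L1x) by rw [hu, hv]; ring, Complex.exp_neg]
    have habs : |f' x| = x⁻¹ + (1-x)⁻¹ := by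
      rw [hf']
      exact abs_of_pos (by positivity)
    rw [hab, hxpow, h1xpow, habs, hden]
    have hb : Complex.exp (u * L1x) ≠ 0 := Complex.exp_ne_zero _
    have hx1C' : (1 - (x:ℂ)) ≠ 0 := by
      intro h; apply hx1C; push_cast; exact h
    push_cast
    field_simp
    ring
  rw [setIntegral_congr_fun measurableSet_Ioo hpt]
  rw [integral_const_mul]
  have hbeta : ∫ x in Set.Ioo (0:ℝ) 1, (x:ℂ) ^ (u - 1) * ((1 - x : ℝ):ℂ) ^ (v - 1)
      = Complex.betaIntegral u v := by
    rw [Complex.betaIntegral, intervalIntegral.integral_of_le zero_le_one,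
      ← integral_Ioc_eq_integral_Ioo]
    apply setIntegral_congr_fun measurableSet_Ioc
    intro x _
    push_cast
    ring_nf
  rw [hbeta]
  have hur : 0 < u.re := by
    rw [hu]; simp [Complex.sub_re, Complex.mul_re]
  have hvr : 0 < v.re := by
    rw [hv]; simp [Complex.add_re, Complex.mul_re]
  have huv : u + v = 1 := by rw [hu, hv]; ring
  have h1 : Complex.Gamma u * Complex.Gamma v = Complex.betaIntegral u v := by
    have := Complex.Gamma_mul_Gamma_eq_betaIntegral hur hvr
    rwa [huv, Complex.Gamma_one, one_mul] at this
  have h2 : Complex.Gamma u * Complex.Gamma v = ↑Real.pi / Complex.sin (↑Real.pi * u) := by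
    have := Complex.Gamma_mul_Gamma_one_sub u
    rwa [show (1 : ℂ) - u = v by rw [hu, hv]; ring] at this
  have h3 : Complex.sin (↑Real.pi * u) = ((Real.cosh (Real.pi * E) : ℝ) : ℂ) := by
    rw [show (↑Real.pi * u) = ↑Real.pi/2 - ((Real.pi * E : ℝ):ℂ) * Complex.I by
      rw [hu]; push_cast; ring]
    rw [Complex.sin_pi_div_two_sub, Complex.cos_mul_I, Complex.ofReal_cosh]
  rw [← h1, h2, h3]
  ring

lemma cpow_exp_aux (E ξ y : ℝ) (hy : 0 ≤ y) :
    ((Real.exp ξ * y : ℝ) : ℂ) ^ (-(Complex.I * E + 1 / 2)) =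
      Complex.exp ((-(Complex.I * E + 1 / 2)) * ξ) * ((y : ℝ) : ℂ) ^ (-(Complex.I * E + 1 / 2)) := by
  rw [Complex.ofReal_mul, Complex.mul_cpow_ofReal_nonneg (Real.exp_pos ξ).le hy]
  congr 1
  rw [Complex.ofReal_exp, Complex.cpow_def_of_ne_zero (Complex.exp_ne_zero _),
    Complex.log_exp (by simp [Real.pi_pos]) (by simp [Real.pi_pos.le]), mul_comm]

lemma exp_half_aux (E ξ : ℝ) :
    Complex.exp ((ξ:ℂ)/2) * Complex.exp ((-(Complex.I * E + 1/2)) * ξ) =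
      Complex.exp (-(Complex.I * E) * ξ) := by
  rw [← Complex.exp_add]; congr 1; ring

lemma point_plus (E x ξ : ℝ) :
    ((1 / Real.cosh (ξ / 2) * Real.exp (ξ / 2) : ℝ) : ℂ) * psiPlus E (-(Real.exp ξ) * x) =
      (((1 / Real.cosh (ξ / 2) : ℝ) : ℂ) * Complex.exp (-(Complex.I * E) * ξ)) * psiPlus E x := by
  unfold psiPlus
  rw [show |(-(Real.exp ξ)) * x| = Real.exp ξ * |x| by rw [abs_mul, abs_neg, Real.abs_exp]]
  rw [cpow_exp_aux E ξ |x| (abs_nonneg x)]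
  have h := exp_half_aux E ξ
  push_cast
  linear_combination (1 / Complex.cosh ((ξ:ℂ)/2) * (1/(2*((Real.sqrt Real.pi : ℝ):ℂ))) *
    (((|x| : ℝ):ℂ) ^ (-(Complex.I * E + 1/2)))) * h

lemma point_minus (E x ξ : ℝ) (hx : x ≠ 0) :
    ((1 / Real.cosh (ξ / 2) * Real.exp (ξ / 2) : ℝ) : ℂ) * psiMinus E (-(Real.exp ξ) * x) =
      -((((1 / Real.cosh (ξ / 2) : ℝ) : ℂ) * Complex.exp (-(Complex.I * E) * ξ)) * psiMinus E x) := by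
  unfold psiMinus
  rw [show |(-(Real.exp ξ)) * x| = Real.exp ξ * |x| by rw [abs_mul, abs_neg, Real.abs_exp]]
  have hs : Real.sign (-(Real.exp ξ) * x) = - Real.sign x := by
    rcases hx.lt_or_gt with h | h
    · rw [Real.sign_of_neg h,
        Real.sign_of_pos (mul_pos_of_neg_of_neg (neg_lt_zero.mpr (Real.exp_pos ξ)) h)]
      norm_num
    · rw [Real.sign_of_pos h,
        Real.sign_of_neg (mul_neg_of_neg_of_pos (neg_lt_zero.mpr (Real.exp_pos ξ)) h)]
  rw [hs, cpow_exp_aux E ξ |x| (abs_nonneg x)]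
  have h := exp_half_aux E ξ
  push_cast
  linear_combination (-(1 / Complex.cosh ((ξ:ℂ)/2)) * (((Real.sign x : ℝ):ℂ)/(2*((Real.sqrt Real.pi : ℝ):ℂ))) *
    (((|x| : ℝ):ℂ) ^ (-(Complex.I * E + 1/2)))) * h

theorem BJ_generalized_eigenvalue (E x : ℝ) (hx : x ≠ 0) :
    ((1 / 4 : ℂ) * ∫ ξ : ℝ,
        ((1 / Real.cosh (ξ / 2) * Real.exp (ξ / 2) : ℝ) : ℂ) *
          psiPlus E (-(Real.exp ξ) * x) =
      ((Real.pi / 2 * (1 / Real.cosh (Real.pi * E)) : ℝ) : ℂ) * psiPlus E x) ∧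
    ((1 / 4 : ℂ) * ∫ ξ : ℝ,
        ((1 / Real.cosh (ξ / 2) * Real.exp (ξ / 2) : ℝ) : ℂ) *
          psiMinus E (-(Real.exp ξ) * x) =
      -(((Real.pi / 2 * (1 / Real.cosh (Real.pi * E)) : ℝ) : ℂ) * psiMinus E x)) := by
  have hcosh : ((Real.cosh (Real.pi * E) : ℝ) : ℂ) ≠ 0 := by
    exact_mod_cast (Real.cosh_pos _).ne'
  constructor
  · have h1 : (∫ ξ : ℝ, ((1 / Real.cosh (ξ / 2) * Real.exp (ξ / 2) : ℝ) : ℂ) *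
        psiPlus E (-(Real.exp ξ) * x))
        = (∫ ξ : ℝ, (((1 / Real.cosh (ξ / 2) : ℝ) : ℂ) *
            Complex.exp (-(Complex.I * E) * ξ)) * psiPlus E x) :=
      integral_congr_ae (Filter.Eventually.of_forall (fun ξ => point_plus E x ξ))
    rw [h1, integral_mul_const, L2]
    push_cast
    field_simp
    ring
  · have h1 : (∫ ξ : ℝ, ((1 / Real.cosh (ξ / 2) * Real.exp (ξ / 2) : ℝ) : ℂ) *
        psiMinus E (-(Real.exp ξ) * x))
        = (∫ ξ : ℝ, -((((1 / Real.cosh (ξ / 2) : ℝ) : ℂ) *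
            Complex.exp (-(Complex.I * E) * ξ)) * psiMinus E x)) :=
      integral_congr_ae (Filter.Eventually.of_forall (fun ξ => point_minus E x ξ hx))
    rw [h1, integral_neg, integral_mul_const, L2]
    push_cast
    field_simp
    ring
end

section
/- For λ, μ > 0, (1/(4π)) ∫_{ℝ²} sinc(px/2) e^{-(λx² + μp²)/4} dx dp = arcsinh(1/√(λμ)), where sinc(a) = sin(a)/a for a ≠ 0 and sinc(0) = 1, and arcsinh(y) = log(y + √(y²+1)). -/
open Real MeasureTheory

noncomputable def sinc (a : ℝ) : ℝ := if a = 0 then 1 else Real.sin a / a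

open Complex in
lemma integral_cos_gaussian (b : ℝ) (hb : 0 < b) (c : ℝ) :
    ∫ x : ℝ, Real.cos (c * x) * Real.exp (-b * x ^ 2) =
      Real.sqrt (Real.pi / b) * Real.exp (-c ^ 2 / (4 * b)) := by
  have hb' : (0:ℝ) < (b:ℂ).re := by simpa using hb
  have key := fourierIntegral_gaussian (b := (b:ℂ)) hb' (c : ℂ)
  have hint : Integrable fun x : ℝ => cexp (I * (c:ℂ) * x) * cexp (-(b:ℂ) * x ^ 2) := by
    have := integrable_cexp_quadratic hb' (I * c) 0
    refine this.congr (Filter.Eventually.of_forall fun x => ?_)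
    simp only [← Complex.exp_add]
    ring_nf
  have hre : (∫ x : ℝ, cexp (I * (c:ℂ) * x) * cexp (-(b:ℂ) * x ^ 2)).re
      = ∫ x : ℝ, Real.cos (c * x) * Real.exp (-b * x ^ 2) := by
    rw [← RCLike.re_eq_complex_re, ← integral_re hint]
    congr 1
    ext x
    have e1 : I * (c:ℂ) * (x:ℂ) = ((c * x : ℝ) : ℂ) * I := by push_cast; ring
    have e2 : -(b:ℂ) * (x:ℂ) ^ 2 = ((-(b * x ^ 2) : ℝ) : ℂ) := by push_cast; ring
    rw [RCLike.re_eq_complex_re, e1, e2, ← Complex.ofReal_exp, mul_comm,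
      Complex.re_ofReal_mul, Complex.exp_ofReal_mul_I_re]
    rw [neg_mul]
    ring
  rw [← hre, key]
  have h12 : ((1:ℂ)/2) = ((1/2 : ℝ) : ℂ) := by norm_num
  have hsq : ((Real.pi : ℂ) / b) ^ ((1:ℂ)/2) = ((Real.sqrt (Real.pi / b) : ℝ) : ℂ) := by
    rw [h12, ← Complex.ofReal_div, ← Complex.ofReal_cpow (by positivity), Real.sqrt_eq_rpow]
  rw [hsq]
  have e3 : (-(c:ℂ) ^ 2 / (4 * b)) = ((-c ^ 2 / (4 * b) : ℝ) : ℂ) := by push_cast; ring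
  rw [e3, ← Complex.ofReal_exp, ← Complex.ofReal_mul]
  exact Complex.ofReal_re _

lemma sinc_eq_integral (a : ℝ) : _root_.sinc a = ∫ t in (0:ℝ)..1, Real.cos (a * t) := by
  rcases eq_or_ne a 0 with h | h
  · simp [_root_.sinc, h]
  · rw [_root_.sinc, if_neg h]
    have hd : ∀ t ∈ Set.uIcc (0:ℝ) 1,
        HasDerivAt (fun u => Real.sin (a * u) / a) (Real.cos (a * t)) t := by
      intro t _
      have h1 : HasDerivAt (fun u : ℝ => a * u) a t := by
        simpa using (hasDerivAt_id t).const_mul a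
      have h2 := ((Real.hasDerivAt_sin (a * t)).comp t h1).div_const a
      simpa [mul_comm, mul_div_assoc, mul_div_cancel_left₀ _ h] using h2
    rw [intervalIntegral.integral_eq_sub_of_hasDerivAt hd
      (((Real.continuous_cos.comp (continuous_const.mul continuous_id)).continuousOn).intervalIntegrable)]
    simp

lemma arsinh_integral (c : ℝ) (hc : 0 < c) :
    ∫ t in (0:ℝ)..1, (Real.sqrt (c + t ^ 2))⁻¹ = Real.arsinh (1 / Real.sqrt c) := by
  have hsc : 0 < Real.sqrt c := Real.sqrt_pos.mpr hc
  have hderiv : ∀ t ∈ Set.uIcc (0:ℝ) 1,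
      HasDerivAt (fun u => Real.arsinh (u / Real.sqrt c)) ((Real.sqrt (c + t ^ 2))⁻¹) t := by
    intro t _
    have h1 : HasDerivAt (fun u : ℝ => u / Real.sqrt c) (1 / Real.sqrt c) t := by
      simpa using (hasDerivAt_id t).div_const (Real.sqrt c)
    have h2 := (Real.hasDerivAt_arsinh (t / Real.sqrt c)).comp t h1
    refine h2.congr_deriv (Eq.symm ?_)
    rw [div_pow, Real.sq_sqrt hc.le]
    rw [show (1:ℝ) + t^2/c = (c + t^2)/c by field_simp]
    rw [Real.sqrt_div (by positivity)]
    have h3 : (0:ℝ) < Real.sqrt (c + t^2) := by positivity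
    field_simp
  have hcont : ContinuousOn (fun t => (Real.sqrt (c + t ^ 2))⁻¹) (Set.uIcc (0:ℝ) 1) := by
    refine ContinuousOn.inv₀ (by fun_prop) fun t _ => ?_
    positivity
  rw [intervalIntegral.integral_eq_sub_of_hasDerivAt hderiv (hcont.intervalIntegrable)]
  simp [Real.arsinh_zero, one_div]

lemma step1 (m : ℝ) (hm : 0 < m) (x : ℝ) :
    ∫ p : ℝ, _root_.sinc (p * x / 2) * Real.exp (-(m * p ^ 2) / 4)
      = ∫ t in (0:ℝ)..1,
          Real.sqrt (4 * Real.pi / m) * Real.exp (-(x ^ 2 * t ^ 2) / (4 * m)) := by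
  have hm4 : (0:ℝ) < m / 4 := by linarith
  have hgauss : Integrable (fun p : ℝ => Real.exp (-(m/4) * p ^ 2)) := integrable_exp_neg_mul_sq hm4
  have hexp_eq : ∀ p : ℝ, Real.exp (-(m * p ^ 2) / 4) = Real.exp (-(m/4) * p ^ 2) := by
    intro p; ring_nf
  have h1 : ∀ p : ℝ, _root_.sinc (p * x / 2) * Real.exp (-(m * p ^ 2) / 4)
      = ∫ t in (0:ℝ)..1, Real.cos (x * t / 2 * p) * Real.exp (-(m/4) * p ^ 2) := by
    intro p
    rw [sinc_eq_integral, hexp_eq, intervalIntegral.integral_mul_const]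
    congr 1
    refine intervalIntegral.integral_congr fun t _ => ?_
    ring_nf
  simp_rw [h1]
  have h2 : ∀ p : ℝ, (∫ t in (0:ℝ)..1, Real.cos (x * t / 2 * p) * Real.exp (-(m/4) * p ^ 2))
      = ∫ t in Set.Ioc (0:ℝ) 1, Real.cos (x * t / 2 * p) * Real.exp (-(m/4) * p ^ 2) := fun p =>
    intervalIntegral.integral_of_le zero_le_one
  simp_rw [h2]
  have hswap : (∫ p : ℝ, ∫ t in Set.Ioc (0:ℝ) 1, Real.cos (x * t / 2 * p) * Real.exp (-(m/4) * p ^ 2))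
      = ∫ t in Set.Ioc (0:ℝ) 1, ∫ p : ℝ, Real.cos (x * t / 2 * p) * Real.exp (-(m/4) * p ^ 2) := by
    apply integral_integral_swap
    have hbig : Integrable (fun z : ℝ × ℝ => Real.exp (-(m/4) * z.1 ^ 2) * 1)
        (volume.prod (volume.restrict (Set.Ioc (0:ℝ) 1))) :=
      hgauss.mul_prod (integrable_const 1)
    refine hbig.mono' ?_ (Filter.Eventually.of_forall fun z => ?_)
    · exact (Continuous.aestronglyMeasurable (by fun_prop))
    · simp only [Function.uncurry, mul_one, norm_mul, Real.norm_eq_abs,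
        Real.abs_exp]
      calc |Real.cos (x * z.2 / 2 * z.1)| * Real.exp (-(m/4) * z.1 ^ 2)
          ≤ 1 * Real.exp (-(m/4) * z.1 ^ 2) := by
            gcongr; exact Real.abs_cos_le_one _
        _ = Real.exp (-(m/4) * z.1 ^ 2) := one_mul _
  rw [hswap, intervalIntegral.integral_of_le zero_le_one]
  refine setIntegral_congr_fun measurableSet_Ioc fun t _ => ?_
  rw [integral_cos_gaussian (m/4) hm4 (x * t / 2)]
  congr 1
  · congr 1; field_simp
  · congr 1; field_simp; ring


theorem gaussian_sinc_integral (l m : ℝ) (hl : 0 < l) (hm : 0 < m) :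
    (1 / (4 * Real.pi)) *
        ∫ x : ℝ, ∫ p : ℝ, _root_.sinc (p * x / 2) * Real.exp (-(l * x ^ 2 + m * p ^ 2) / 4) =
      Real.arsinh (1 / Real.sqrt (l * m)) := by
  have hl4 : (0:ℝ) < l / 4 := by linarith
  have hC : (0:ℝ) < Real.sqrt (4 * Real.pi / m) := Real.sqrt_pos.mpr (by positivity)
  -- inner integral
  have hx : ∀ x : ℝ, (∫ p : ℝ, _root_.sinc (p * x / 2) * Real.exp (-(l * x ^ 2 + m * p ^ 2) / 4))
      = ∫ t in Set.Ioc (0:ℝ) 1, Real.exp (-(l/4) * x ^ 2) *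
          (Real.sqrt (4 * Real.pi / m) * Real.exp (-(x ^ 2 * t ^ 2) / (4 * m))) := by
    intro x
    have e1 : ∀ p : ℝ, _root_.sinc (p * x / 2) * Real.exp (-(l * x ^ 2 + m * p ^ 2) / 4)
        = Real.exp (-(l/4) * x ^ 2) * (_root_.sinc (p * x / 2) * Real.exp (-(m * p ^ 2) / 4)) := by
      intro p
      rw [show (-(l * x ^ 2 + m * p ^ 2) / 4) = (-(l/4) * x ^ 2) + (-(m * p ^ 2) / 4) by ring,
        Real.exp_add]
      ring
    simp_rw [e1]
    rw [integral_const_mul, step1 m hm x, intervalIntegral.integral_of_le zero_le_one,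
      ← integral_const_mul]
  simp_rw [hx]
  -- swap x and t
  have hswap : (∫ x : ℝ, ∫ t in Set.Ioc (0:ℝ) 1, Real.exp (-(l/4) * x ^ 2) *
        (Real.sqrt (4 * Real.pi / m) * Real.exp (-(x ^ 2 * t ^ 2) / (4 * m))))
      = ∫ t in Set.Ioc (0:ℝ) 1, ∫ x : ℝ, Real.exp (-(l/4) * x ^ 2) *
        (Real.sqrt (4 * Real.pi / m) * Real.exp (-(x ^ 2 * t ^ 2) / (4 * m))) := by
    apply integral_integral_swap
    have hbig : Integrable
        (fun z : ℝ × ℝ => (Real.sqrt (4 * Real.pi / m) * Real.exp (-(l/4) * z.1 ^ 2)) * 1)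
        (volume.prod (volume.restrict (Set.Ioc (0:ℝ) 1))) :=
      ((integrable_exp_neg_mul_sq hl4).const_mul _).mul_prod (integrable_const 1)
    refine hbig.mono' (Continuous.aestronglyMeasurable (by fun_prop))
      (Filter.Eventually.of_forall fun z => ?_)
    simp only [Function.uncurry, mul_one, norm_mul, Real.norm_eq_abs, Real.abs_exp,
      abs_of_pos hC]
    have hB : Real.exp (-(z.1 ^ 2 * z.2 ^ 2) / (4 * m)) ≤ 1 :=
      Real.exp_le_one_iff.mpr (by rw [neg_div]; exact neg_nonpos.mpr (by positivity))
    calc Real.exp (-(l/4) * z.1 ^ 2) * (Real.sqrt (4 * Real.pi / m) *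
            Real.exp (-(z.1 ^ 2 * z.2 ^ 2) / (4 * m)))
        = Real.sqrt (4 * Real.pi / m) * Real.exp (-(l/4) * z.1 ^ 2) *
            Real.exp (-(z.1 ^ 2 * z.2 ^ 2) / (4 * m)) := by ring
      _ ≤ Real.sqrt (4 * Real.pi / m) * Real.exp (-(l/4) * z.1 ^ 2) * 1 := by
          exact mul_le_mul_of_nonneg_left hB (by positivity)
      _ = Real.sqrt (4 * Real.pi / m) * Real.exp (-(l/4) * z.1 ^ 2) := mul_one _
  rw [hswap]
  -- inner x-gaussian
  have hxg : ∀ t : ℝ, (∫ x : ℝ, Real.exp (-(l/4) * x ^ 2) *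
        (Real.sqrt (4 * Real.pi / m) * Real.exp (-(x ^ 2 * t ^ 2) / (4 * m))))
      = 4 * Real.pi * (Real.sqrt (l * m + t ^ 2))⁻¹ := by
    intro t
    have hb : (0:ℝ) < l/4 + t ^ 2 / (4 * m) := by positivity
    have e2 : ∀ x : ℝ, Real.exp (-(l/4) * x ^ 2) *
          (Real.sqrt (4 * Real.pi / m) * Real.exp (-(x ^ 2 * t ^ 2) / (4 * m)))
        = Real.sqrt (4 * Real.pi / m) * Real.exp (-(l/4 + t ^ 2 / (4 * m)) * x ^ 2) := by
      intro x
      rw [show (-(l/4 + t ^ 2 / (4 * m)) * x ^ 2)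
          = (-(l/4) * x ^ 2) + (-(x ^ 2 * t ^ 2) / (4 * m)) by field_simp; ring, Real.exp_add]
      ring
    simp_rw [e2]
    rw [integral_const_mul, integral_gaussian, ← Real.sqrt_mul (by positivity)]
    have e3 : 4 * Real.pi / m * (Real.pi / (l/4 + t ^ 2 / (4 * m)))
        = (4 * Real.pi) ^ 2 / (l * m + t ^ 2) := by
      field_simp
    rw [e3, Real.sqrt_div (by positivity), Real.sqrt_sq (by positivity), div_eq_mul_inv]
  simp_rw [hxg]
  rw [← intervalIntegral.integral_of_le zero_le_one]
  have := arsinh_integral (l * m) (by positivity)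
  rw [intervalIntegral.integral_const_mul, this]
  field_simp
end

section
/- Define b_k = (-1)^k Σ_{m=0}^{⌊k/2⌋} (2m choose m)(-1/4)^m for k ∈ ℕ. Then the series Σ_{k=0}^∞ b_k/(k+1) converges. -/
open Real Filter

noncomputable def bSeq (k : ℕ) : ℝ :=
  (-1) ^ k * ∑ m ∈ Finset.range (k / 2 + 1), (Nat.choose (2 * m) m : ℝ) * (-1 / 4) ^ m

noncomputable def cSeq (m : ℕ) : ℝ := (Nat.choose (2 * m) m : ℝ) * (1 / 4) ^ m

lemma cSeq_nonneg (m : ℕ) : 0 ≤ cSeq m := by unfold cSeq; positivity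

lemma cSeq_succ_le (m : ℕ) : cSeq (m + 1) ≤ cSeq m := by
  have h : ((m : ℝ) + 1) * (Nat.choose (2 * (m + 1)) (m + 1) : ℝ) =
      2 * (2 * m + 1) * (Nat.choose (2 * m) m : ℝ) := by
    have := Nat.succ_mul_centralBinom_succ m
    unfold Nat.centralBinom at this
    exact_mod_cast this
  unfold cSeq
  rw [pow_succ]
  have h4 : (0 : ℝ) < (1 / 4) ^ m := by positivity
  have hm : (0 : ℝ) < (m : ℝ) + 1 := by positivity
  have hc : (0 : ℝ) ≤ (Nat.choose (2 * m) m : ℝ) := Nat.cast_nonneg _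
  nlinarith [mul_le_mul_of_nonneg_right (le_of_eq h) (le_of_lt h4), mul_pos hm h4,
    mul_nonneg hc (le_of_lt h4)]

noncomputable def Tsum (j : ℕ) : ℝ := ∑ m ∈ Finset.range j, (-1) ^ m * cSeq m

lemma Tsum_bounds (j : ℕ) : 0 ≤ Tsum (2 * j) ∧ Tsum (2 * j) + cSeq (2 * j) ≤ 1 := by
  induction j with
  | zero => simp [Tsum, cSeq]
  | succ j ih =>
    have e : 2 * (j + 1) = (2 * j + 1) + 1 := by ring
    have hT : Tsum (2 * (j + 1)) = Tsum (2 * j) + cSeq (2 * j) - cSeq (2 * j + 1) := by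
      rw [e]
      unfold Tsum
      rw [Finset.sum_range_succ, Finset.sum_range_succ]
      have h1 : ((-1 : ℝ)) ^ (2 * j) = 1 := by
        rw [pow_mul]; norm_num
      have h2 : ((-1 : ℝ)) ^ (2 * j + 1) = -1 := by
        rw [pow_succ, h1]; ring
      rw [h1, h2]; ring
    constructor
    · rw [hT]
      have := cSeq_succ_le (2 * j)
      linarith [ih.1]
    · rw [hT]
      have := cSeq_succ_le (2 * j + 1)
      have e2 : 2 * j + 1 + 1 = 2 * (j + 1) := by ring
      rw [e2] at this
      linarith [ih.2]

lemma Tsum_mem (j : ℕ) : 0 ≤ Tsum j ∧ Tsum j ≤ 1 := by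
  rcases Nat.even_or_odd j with ⟨i, hi⟩ | ⟨i, hi⟩
  · subst hi
    have h := Tsum_bounds i
    have h2 : (i + i) = 2 * i := by ring
    rw [h2]
    exact ⟨h.1, by linarith [cSeq_nonneg (2 * i), h.2]⟩
  · subst hi
    have h := Tsum_bounds i
    have hT : Tsum (2 * i + 1) = Tsum (2 * i) + cSeq (2 * i) := by
      unfold Tsum
      rw [Finset.sum_range_succ]
      have h1 : ((-1 : ℝ)) ^ (2 * i) = 1 := by rw [pow_mul]; norm_num
      rw [h1]; ring
    rw [hT]
    exact ⟨by linarith [cSeq_nonneg (2 * i), h.1], h.2⟩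

lemma bSeq_even (j : ℕ) : bSeq (2 * j) = Tsum (j + 1) := by
  unfold bSeq Tsum cSeq
  have h1 : ((-1 : ℝ)) ^ (2 * j) = 1 := by rw [pow_mul]; norm_num
  have h2 : 2 * j / 2 = j := by omega
  rw [h1, h2, one_mul]
  apply Finset.sum_congr rfl
  intro m _
  have : ((-1 : ℝ) / 4) ^ m = (-1) ^ m * (1 / 4) ^ m := by
    rw [← mul_pow]; norm_num
  rw [this]; ring

lemma bSeq_odd (j : ℕ) : bSeq (2 * j + 1) = -bSeq (2 * j) := by
  unfold bSeq
  have h2 : (2 * j + 1) / 2 = 2 * j / 2 := by omega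
  rw [h2, pow_succ]
  ring

lemma partial_even (j : ℕ) : ∑ k ∈ Finset.range (2 * j), bSeq k = 0 := by
  induction j with
  | zero => simp
  | succ j ih =>
    have e : 2 * (j + 1) = (2 * j + 1) + 1 := by ring
    rw [e, Finset.sum_range_succ, Finset.sum_range_succ, ih, bSeq_odd]
    ring

lemma partial_bound (n : ℕ) : ‖∑ k ∈ Finset.range n, bSeq k‖ ≤ 1 := by
  rcases Nat.even_or_odd n with ⟨i, hi⟩ | ⟨i, hi⟩
  · subst hi
    have h2 : i + i = 2 * i := by ring
    rw [h2, partial_even]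
    norm_num
  · subst hi
    rw [Finset.sum_range_succ, partial_even, zero_add, bSeq_even]
    have := Tsum_mem (i + 1)
    rw [Real.norm_eq_abs, abs_le]
    constructor <;> linarith [this.1, this.2]

theorem bSeq_series_converges :
    ∃ L : ℝ, Tendsto (fun n => ∑ k ∈ Finset.range n, bSeq k / (k + 1)) atTop (nhds L) := by
  have hfa : Antitone (fun n : ℕ => (1 : ℝ) / (n + 1)) := by
    intro a b hab
    apply one_div_le_one_div_of_le
    · positivity
    · exact_mod_cast by exact_mod_cast add_le_add_left (Nat.cast_le.mpr hab : (a:ℝ) ≤ b) 1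
  have hf0 : Tendsto (fun n : ℕ => (1 : ℝ) / (n + 1)) atTop (nhds 0) :=
    tendsto_one_div_add_atTop_nhds_zero_nat
  have hc := hfa.cauchySeq_series_mul_of_tendsto_zero_of_bounded hf0 partial_bound
  have heq : (fun n => ∑ k ∈ Finset.range n, bSeq k / (k + 1)) =
      fun n => ∑ i ∈ Finset.range n, (1 / (i + 1 : ℝ)) • bSeq i := by
    funext n
    apply Finset.sum_congr rfl
    intro k _
    rw [smul_eq_mul]
    ring
  rw [heq]
  exact cauchySeq_tendsto_of_complete hc
end
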